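/- For each fixed d ≥ 1 and n ≥ 1, the sequence D(d,n,k) for k = 0, 1, ..., d is log-concave: D(d,n,k)^2 ≥ D(d,n,k-1)·D(d,n,k+1) for all 1 ≤ k ≤ d-1. -/
import Mathlib


/-- The descent polynomial coefficient `D(d,n,k)` of indexed permutations,
via its explicit alternating-sum formula. -/
noncomputable def D (d n k : ℕ) : ℝ :=
  ∑ i ∈ Finset.range (k + 1),
    (-1 : ℝ) ^ i * ((d + 1).choose i : ℝ) * ((n : ℝ) * ((k : ℝ) - i) + 1) ^ d

lemma choose_id (d i : ℕ) :
    ((i:ℝ)+1) * ((d+1).choose (i+1) : ℝ) = ((d:ℝ)+1-(i:ℝ)) * ((d+1).choose i : ℝ) := by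
  rcases le_or_gt i (d+1) with h | h
  · have h1 := Nat.choose_succ_right_eq (d+1) i
    have h2 : ((((d+1).choose (i+1) : ℕ) : ℝ) * ((i:ℝ)+1)) = (((d+1).choose i : ℕ) : ℝ) * (((d+1-i : ℕ)) : ℝ) := by
      exact_mod_cast congrArg (Nat.cast (R := ℝ)) h1
    rw [Nat.cast_sub h] at h2
    push_cast at h2 ⊢
    linarith [h2]
  · rw [Nat.choose_eq_zero_of_lt h, Nat.choose_eq_zero_of_lt (by omega)]
    simp

lemma sum_peel (F G H : ℕ → ℝ) (A B : ℝ) (k : ℕ)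
    (h0 : F 0 = A * G 0)
    (hstep : ∀ i ∈ Finset.range (k+1), F (i+1) = A * G (i+1) + B * H i) :
    ∑ i ∈ Finset.range (k+2), F i
      = A * ∑ i ∈ Finset.range (k+2), G i + B * ∑ i ∈ Finset.range (k+1), H i := by
  rw [Finset.sum_range_succ' F (k+1), Finset.sum_range_succ' G (k+1)]
  rw [Finset.sum_congr rfl hstep, Finset.sum_add_distrib, h0,
    ← Finset.mul_sum, ← Finset.mul_sum]
  ring

lemma D_rec (d n k : ℕ) :
    D (d+1) n (k+1)
      = ((n:ℝ)*((k:ℝ)+1)+1) * D d n (k+1)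
        + ((n:ℝ)*((d:ℝ)-(k:ℝ)) + (n:ℝ) - 1) * D d n k := by
  unfold D
  refine sum_peel _ _ _ _ _ k ?_ ?_
  · push_cast [Nat.choose_zero_right]
    ring
  · intro i _
    have pascal : (((d+1+1).choose (i+1) : ℕ) : ℝ)
        = ((d+1).choose i : ℝ) + ((d+1).choose (i+1) : ℝ) := by
      exact_mod_cast congrArg (Nat.cast (R := ℝ)) (Nat.choose_succ_succ (d+1) i)
    have cid := choose_id d i
    push_cast at pascal cid ⊢
    linear_combination
      (((-1:ℝ)^i * ((n:ℝ)*((k:ℝ)-i)+1)^d) * (-((n:ℝ)*((k:ℝ)-i)+1))) * pascal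
      + (((-1:ℝ)^i * ((n:ℝ)*((k:ℝ)-i)+1)^d) * (n:ℝ)) * cid

lemma D_zero (d n : ℕ) : D d n 0 = 1 := by
  simp [D]

lemma D_vanish (n : ℕ) : ∀ d k : ℕ, d + 1 ≤ k → D d n k = 0 := by
  intro d
  induction d with
  | zero =>
    intro k hk
    obtain ⟨m, rfl⟩ : ∃ m, k = m + 1 := ⟨k - 1, by omega⟩
    unfold D
    simp only [pow_zero, mul_one]
    induction m with
    | zero => simp [Finset.sum_range_succ]
    | succ m ihm =>
      rw [Finset.sum_range_succ]
      rw [ihm (by omega)]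
      rw [Nat.choose_eq_zero_of_lt (by omega)]
      simp
  | succ d ih =>
    intro k hk
    obtain ⟨m, rfl⟩ : ∃ m, k = m + 1 := ⟨k - 1, by omega⟩
    rw [D_rec, ih (m+1) (by omega), ih m (by omega)]
    ring

lemma D_nonneg (n : ℕ) (hn : 1 ≤ n) : ∀ d k : ℕ, 0 ≤ D d n k := by
  intro d
  induction d with
  | zero =>
    intro k
    match k with
    | 0 => rw [D_zero]; norm_num
    | (m+1) => rw [D_vanish n 0 (m+1) (by omega)]
  | succ d ih =>
    intro k
    match k with
    | 0 => rw [D_zero]; norm_num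
    | (m+1) =>
      rcases le_or_gt m d with h | h
      · rw [D_rec]
        have h1 : (0:ℝ) ≤ (n:ℝ)*((m:ℝ)+1)+1 := by positivity
        have h2 : (0:ℝ) ≤ (n:ℝ)*((d:ℝ)-(m:ℝ)) + (n:ℝ) - 1 := by
          have hdm : (0:ℝ) ≤ (d:ℝ)-(m:ℝ) := by
            have : (m:ℝ) ≤ (d:ℝ) := by exact_mod_cast h
            linarith
          have hn1 : (1:ℝ) ≤ (n:ℝ) := by exact_mod_cast hn
          nlinarith
        have := ih (m+1)
        have := ih m
        positivity
      · rw [D_vanish n (d+1) (m+1) (by omega)]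

lemma amgm (P Q R : ℝ) (hQ : 0 ≤ Q) (hP : 0 ≤ P) (hR : 0 ≤ R) (h : Q*Q ≤ P*R) :
    2*Q ≤ P + R := by
  nlinarith [sq_nonneg (P - R), sq_nonneg (P + R - 2*Q)]

lemma core (N Dr K K' bk b1 bk' b1' b2 c : ℝ)
    (hn1 : 1 ≤ N) (hKpos : 0 ≤ K) (hKK : K ≤ K') (hK'd : K' + 1 ≤ Dr)
    (hbk0 : 0 ≤ bk) (hb10 : 0 ≤ b1) (hbk'0 : 0 ≤ bk') (hb1'0 : 0 ≤ b1')
    (hb20 : 0 ≤ b2) (hc0 : 0 ≤ c)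
    (h1 : bk * b2 ≤ b1 * b1') (h2 : c * b2 ≤ bk * b1')
    (h3 : c * b1' ≤ bk * bk') (h4 : bk * b1' ≤ b1 * bk') :
    ((N*K+1) * bk + (N*(Dr+1-K)+N-1) * c) * ((N*(K'+2)+1) * b2 + (N*(Dr-K'-1)+N-1) * b1')
      ≤ ((N*(K+1)+1) * b1 + (N*(Dr-K)+N-1) * bk)
          * ((N*(K'+1)+1) * b1' + (N*(Dr-K')+N-1) * bk') := by
  have hK'pos : 0 ≤ K' := le_trans hKpos hKK
  have hXk : (0:ℝ) ≤ N*K+1 := by nlinarith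
  have hX1 : (0:ℝ) ≤ N*(K+1)+1 := by nlinarith
  have hX1' : (0:ℝ) ≤ N*(K'+1)+1 := by nlinarith
  have hX2 : (0:ℝ) ≤ N*(K'+2)+1 := by nlinarith
  have hYk : (0:ℝ) ≤ N*(Dr+1-K)+N-1 := by nlinarith
  have hY1 : (0:ℝ) ≤ N*(Dr-K)+N-1 := by nlinarith
  have hY1' : (0:ℝ) ≤ N*(Dr-K')+N-1 := by nlinarith
  have hY2 : (0:ℝ) ≤ N*(Dr-K'-1)+N-1 := by nlinarith
  have hQ2 : (bk*b1') * (bk*b1') ≤ (b1*b1') * (bk*bk') := by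
    have := mul_le_mul_of_nonneg_right h4 (mul_nonneg hbk0 hb1'0)
    nlinarith [this]
  have h5 : 2*(bk*b1') ≤ b1*b1' + bk*bk' :=
    amgm _ _ _ (mul_nonneg hbk0 hb1'0) (mul_nonneg hb10 hb1'0)
      (mul_nonneg hbk0 hbk'0) hQ2
  have t1 := mul_le_mul_of_nonneg_left h1 (mul_nonneg hXk hX2)
  have t2 := mul_le_mul_of_nonneg_left h2 (mul_nonneg hYk hX2)
  have t3 := mul_le_mul_of_nonneg_left h3 (mul_nonneg hYk hY2)
  have t4 := mul_le_mul_of_nonneg_left h4 (mul_nonneg hX1 hY1')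
  have hm : (0:ℝ) ≤ N^2 * (K' - K + 1) :=
    mul_nonneg (sq_nonneg N) (by linarith)
  have t5 := mul_nonneg hm (by linarith : (0:ℝ) ≤ b1*b1' + bk*bk' - 2*(bk*b1'))
  calc ((N*K+1) * bk + (N*(Dr+1-K)+N-1) * c) * ((N*(K'+2)+1) * b2 + (N*(Dr-K'-1)+N-1) * b1')
      ≤ (N*K+1)*(N*(K'+2)+1)*(b1*b1')
          + ((N*K+1)*(N*(Dr-K'-1)+N-1) + (N*(Dr+1-K)+N-1)*(N*(K'+2)+1))*(bk*b1')
          + (N*(Dr+1-K)+N-1)*(N*(Dr-K'-1)+N-1)*(bk*bk') := by linarith [t1, t2, t3]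
    _ ≤ (N*(K+1)+1)*(N*(K'+1)+1)*(b1*b1')
          + ((N*(K+1)+1)*(N*(Dr-K')+N-1) + (N*(Dr-K)+N-1)*(N*(K'+1)+1))*(bk*b1')
          + (N*(Dr-K)+N-1)*(N*(Dr-K')+N-1)*(bk*bk') := by linarith [t5]
    _ ≤ ((N*(K+1)+1) * b1 + (N*(Dr-K)+N-1) * bk)
          * ((N*(K'+1)+1) * b1' + (N*(Dr-K')+N-1) * bk') := by linarith [t4]

lemma D_main (n : ℕ) (hn : 1 ≤ n) :
    ∀ d k k' : ℕ, k ≤ k' →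
      D d n k * D d n (k' + 2) ≤ D d n (k + 1) * D d n (k' + 1) := by
  intro d
  induction d with
  | zero =>
    intro k k' hkk
    rw [D_vanish n 0 (k'+2) (by omega), D_vanish n 0 (k+1) (by omega)]
    simp
  | succ d ih =>
    intro k k' hkk
    rcases le_or_gt d k' with hbig | hsm
    · rw [D_vanish n (d+1) (k'+2) (by omega), mul_zero]
      exact mul_nonneg (D_nonneg n hn (d+1) (k+1)) (D_nonneg n hn (d+1) (k'+1))
    -- now k' + 1 ≤ d
    have nb : ∀ j, 0 ≤ D d n j := D_nonneg n hn d
    have hn1 : (1:ℝ) ≤ (n:ℝ) := by exact_mod_cast hn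
    have hKK : (k:ℝ) ≤ (k':ℝ) := by exact_mod_cast hkk
    have hK'd : (k':ℝ) + 1 ≤ (d:ℝ) := by exact_mod_cast hsm
    obtain ⟨c, hc0, hrk, h2, h3⟩ :
        ∃ c : ℝ, 0 ≤ c ∧
          D (d+1) n k = ((n:ℝ)*(k:ℝ)+1) * D d n k
              + ((n:ℝ)*((d:ℝ)+1-(k:ℝ))+(n:ℝ)-1) * c ∧
          c * D d n (k'+2) ≤ D d n k * D d n (k'+1) ∧
          c * D d n (k'+1) ≤ D d n k * D d n k' := by
      rcases k with _ | m
      · refine ⟨0, le_refl 0, ?_, ?_, ?_⟩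
        · rw [D_zero, D_zero]
          push_cast
          ring
        · simpa using mul_nonneg (nb 0) (nb (k'+1))
        · simpa using mul_nonneg (nb 0) (nb k')
      · obtain ⟨k'', rfl⟩ : ∃ t, k' = t + 1 := ⟨k' - 1, by omega⟩
        refine ⟨D d n m, nb m, ?_, ?_, ?_⟩
        · rw [D_rec d n m]
          push_cast
          ring
        · have := ih m (k''+1) (by omega)
          convert this using 3 <;> omega
        · exact ih m k'' (by omega)
    have h1 : D d n k * D d n (k'+2) ≤ D d n (k+1) * D d n (k'+1) := ih k k' hkk
    have h4 : D d n k * D d n (k'+1) ≤ D d n (k+1) * D d n k' := by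
      rcases eq_or_lt_of_le hkk with rfl | hlt
      · exact le_of_eq (mul_comm _ _)
      · obtain ⟨k'', rfl⟩ : ∃ t, k' = t + 1 := ⟨k' - 1, by omega⟩
        exact ih k k'' (by omega)
    have e1 : D (d+1) n (k+1)
        = ((n:ℝ)*((k:ℝ)+1)+1) * D d n (k+1) + ((n:ℝ)*((d:ℝ)-(k:ℝ))+(n:ℝ)-1) * D d n k :=
      D_rec d n k
    have e2 : D (d+1) n (k'+1)
        = ((n:ℝ)*((k':ℝ)+1)+1) * D d n (k'+1) + ((n:ℝ)*((d:ℝ)-(k':ℝ))+(n:ℝ)-1) * D d n k' :=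
      D_rec d n k'
    have e3 : D (d+1) n (k'+2)
        = ((n:ℝ)*((k':ℝ)+2)+1) * D d n (k'+2)
          + ((n:ℝ)*((d:ℝ)-(k':ℝ)-1)+(n:ℝ)-1) * D d n (k'+1) := by
      have h := D_rec d n (k'+1)
      have hidx : k'+1+1 = k'+2 := rfl
      rw [hidx] at h
      rw [h]
      push_cast
      ring
    rw [hrk, e1, e2, e3]
    exact core (n:ℝ) (d:ℝ) (k:ℝ) (k':ℝ) (D d n k) (D d n (k+1)) (D d n k')
      (D d n (k'+1)) (D d n (k'+2)) c hn1 (Nat.cast_nonneg k) hKK hK'd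
      (nb k) (nb (k+1)) (nb k') (nb (k'+1)) (nb (k'+2)) hc0 h1 h2 h3 h4

theorem descent_poly_log_concave (d n k : ℕ) (hd : 1 ≤ d) (hn : 1 ≤ n)
    (hk1 : 1 ≤ k) (hkd : k ≤ d - 1) :
    D d n (k - 1) * D d n (k + 1) ≤ D d n k ^ 2 := by
  obtain ⟨m, rfl⟩ : ∃ m, k = m + 1 := ⟨k - 1, by omega⟩
  have := D_main n hn d m m (le_refl m)
  simpa [pow_two] using this
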